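/- Let (Ω, F, P) be a probability space with filtration (F_k)_{k∈ℕ}. Let h : ℝⁿ → ℝ be a concave function, let μ* ∈ ℝⁿ with μ* ≥ 0 componentwise be a maximizer of h (h(μ) ≤ h(μ*) for all μ ∈ ℝⁿ), let G > 0, and let (ε_k) be nonnegative reals with ∑_{k=1}^∞ ε_k² < ∞ and ∑_{k=1}^∞ ε_k = ∞. Let (μ(k)) be a process adapted to (F_k) with values in the nonnegative orthant ℝⁿ₊ with E[‖μ(1) − μ*‖²] < ∞ and E[|h(μ(k))|] < ∞ for all k, and let g(k+1) be F_{k+1}-measurable ℝⁿ-valued random vectors such that, almost surely, E[‖g(k+1)‖² | F_k] ≤ G² and E[g(k+1) | F_k] is a supergradient of h at μ(k). Suppose μ(k+1) = proj₊( μ(k) + ε_k · g(k+1) ) for all k, each μ(k) is integrable, and the sequence of means μ̃(k) := E[μ(k)] (componentwise expectation) converges to some μ̃(∞) ∈ ℝⁿ. Then h(μ̃(∞)) = h(μ*); that is, the limit of the expected dual iterates attains the maximum of the dual function. -/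

import Mathlib

open MeasureTheory Filter RealInnerProductSpace

/-- Componentwise projection onto the nonnegative orthant of `ℝⁿ`. -/
noncomputable def projPos {n : ℕ} (x : EuclideanSpace ℝ (Fin n)) : EuclideanSpace ℝ (Fin n) :=
  WithLp.toLp 2 (fun j => max (x j) 0)

lemma coord_abs_le_norm {n : ℕ} (x : EuclideanSpace ℝ (Fin n)) (j : Fin n) : |x j| ≤ ‖x‖ := by
  rw [EuclideanSpace.norm_eq]
  have h1 : |x j| = Real.sqrt (|x j| ^ 2) := by
    rw [Real.sqrt_sq_eq_abs, abs_abs]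
  rw [h1]
  apply Real.sqrt_le_sqrt
  have := Finset.single_le_sum (f := fun i => ‖x i‖ ^ 2) (fun i _ => by positivity)
    (Finset.mem_univ j)
  simpa [Real.norm_eq_abs] using this

lemma projPos_nonexpansive {n : ℕ} (x y : EuclideanSpace ℝ (Fin n)) (hy : ∀ j, 0 ≤ y j) :
    ‖projPos x - y‖ ≤ ‖x - y‖ := by
  rw [EuclideanSpace.norm_eq, EuclideanSpace.norm_eq]
  apply Real.sqrt_le_sqrt
  apply Finset.sum_le_sum
  intro j _
  have hj : |projPos x j - y j| ≤ |x j - y j| := by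
    have h0 : y j = max (y j) 0 := (max_eq_left (hy j)).symm
    have := abs_max_sub_max_le_abs (x j) (y j) 0
    calc |projPos x j - y j| = |max (x j) 0 - max (y j) 0| := by rw [← h0]; rfl
    _ ≤ |x j - y j| := this
  simp only [PiLp.sub_apply, Real.norm_eq_abs]
  exact pow_le_pow_left₀ (abs_nonneg _) hj 2

lemma condexp_clm_comm {Ω : Type*} {m : MeasurableSpace Ω} {m0 : MeasurableSpace Ω}
    (hm : m ≤ m0) (P : Measure Ω) [IsFiniteMeasure P]
    {E F : Type*} [NormedAddCommGroup E] [NormedSpace ℝ E] [CompleteSpace E]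
    [NormedAddCommGroup F] [NormedSpace ℝ F] [CompleteSpace F]
    (T : E →L[ℝ] F) {f : Ω → E} (hf : Integrable f P) :
    (fun a => T ((P[f|m]) a)) =ᵐ[P] P[fun a => T (f a)|m] := by
  have hq : Integrable (P[f|m]) P := integrable_condExp
  have hTf : Integrable (fun a => T (f a)) P := T.integrable_comp hf
  have hTq : Integrable (fun a => T ((P[f|m]) a)) P := T.integrable_comp hq
  refine ae_eq_condExp_of_forall_setIntegral_eq hm hTf
    (fun s _ _ => hTq.integrableOn)
    (fun s hs hμs => ?_) ?_
  · rw [T.integral_comp_comm hq.integrableOn,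
      T.integral_comp_comm hf.integrableOn, setIntegral_condExp hm hf hs]
  · exact StronglyMeasurable.aestronglyMeasurable
      (T.continuous.comp_stronglyMeasurable stronglyMeasurable_condExp)

lemma integrable_inner_of_memL2 {Ω : Type*} {m0 : MeasurableSpace Ω} {P : Measure Ω}
    {E : Type*} [NormedAddCommGroup E] [InnerProductSpace ℝ E]
    {f g : Ω → E} (hf : MemLp f 2 P) (hg : MemLp g 2 P) :
    Integrable (fun a => (inner ℝ (f a) (g a) : ℝ)) P := by
  have := L2.integrable_inner (𝕜 := ℝ) (hf.toLp f) (hg.toLp g)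
  refine this.congr ?_
  filter_upwards [hf.coeFn_toLp, hg.coeFn_toLp] with a h1 h2
  rw [h1, h2]

set_option maxHeartbeats 2000000 in
/-- **Optimality on average of the stochastic dual algorithm** (cf. Theorem 4 of the paper).
With square-summable but non-summable stepsizes, if the means `μ̃(k) = E[μ(k)]` of the
projected stochastic supergradient iterates converge to `μ̃(∞)`, then `h(μ̃(∞)) = h(μ*)`:
the limit of the expected dual iterates attains the maximum of the dual function. -/
theorem stmt9 {Ω : Type*} {m0 : MeasurableSpace Ω} (P : Measure Ω) [IsProbabilityMeasure P]
    (ℱ : Filtration ℕ m0) {n : ℕ}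
    (h : EuclideanSpace ℝ (Fin n) → ℝ) (hconc : ConcaveOn ℝ Set.univ h)
    (μstar : EuclideanSpace ℝ (Fin n)) (hμstar : ∀ j, 0 ≤ μstar j)
    (hmax : ∀ ν, h ν ≤ h μstar)
    (G : ℝ) (hG : 0 < G)
    (ε : ℕ → ℝ) (hε : ∀ k, 0 ≤ ε k)
    (hεsq : Summable fun k => (ε k) ^ 2)
    (hεdiv : Tendsto (fun K => ∑ k ∈ Finset.range K, ε k) atTop atTop)
    (μproc : ℕ → Ω → EuclideanSpace ℝ (Fin n))
    (hadapted : Adapted ℱ μproc)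
    (hpos : ∀ k a j, 0 ≤ μproc k a j)
    (hμint : ∀ k, Integrable (μproc k) P)
    (hμ1int : Integrable (fun a => ‖μproc 1 a - μstar‖ ^ 2) P)
    (hhint : ∀ k, Integrable (fun a => h (μproc k a)) P)
    (g : ℕ → Ω → EuclideanSpace ℝ (Fin n))
    (hgmeas : ∀ k, StronglyMeasurable[ℱ (k + 1)] (g (k + 1)))
    (hgint : ∀ k, Integrable (g (k + 1)) P)
    (hgsqint : ∀ k, Integrable (fun a => ‖g (k + 1) a‖ ^ 2) P)
    (hbound : ∀ k, ∀ᵐ a ∂P, (P[fun a' => ‖g (k + 1) a'‖ ^ 2 | ℱ k]) a ≤ G ^ 2)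
    (hsupergrad : ∀ k, ∀ᵐ a ∂P, ∀ ν,
      h ν ≤ h (μproc k a) + ⟪(P[g (k + 1) | ℱ k]) a, ν - μproc k a⟫)
    (hupdate : ∀ k a, μproc (k + 1) a = projPos (μproc k a + ε k • g (k + 1) a))
    (μtilde : EuclideanSpace ℝ (Fin n))
    (hmean : Tendsto (fun k => ∫ a, μproc k a ∂P) atTop (nhds μtilde)) :
    h μtilde = h μstar := by
  classical
  have hcont : Continuous h := continuousOn_univ.1 (hconc.continuousOn isOpen_univ)
  have hμmeas : ∀ k, AEStronglyMeasurable (μproc k) P :=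
    fun k => ((hadapted k).mono (ℱ.le k) le_rfl).aestronglyMeasurable
  have hgms : ∀ k, AEStronglyMeasurable (g (k + 1)) P :=
    fun k => ((hgmeas k).mono (ℱ.le (k + 1))).aestronglyMeasurable
  have hgL2 : ∀ k, MemLp (g (k + 1)) 2 P :=
    fun k => (memLp_two_iff_integrable_sq_norm (hgms k)).2 (hgsqint k)
  -- nonexpansive bound on iterates
  have hbd : ∀ k a, ‖μproc (k + 1) a - μstar‖ ≤
      ‖μproc k a - μstar‖ + ε k * ‖g (k + 1) a‖ := by
    intro k a
    rw [hupdate k a]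
    calc ‖projPos (μproc k a + ε k • g (k + 1) a) - μstar‖
        ≤ ‖μproc k a + ε k • g (k + 1) a - μstar‖ := projPos_nonexpansive _ _ hμstar
      _ = ‖(μproc k a - μstar) + ε k • g (k + 1) a‖ := by rw [add_sub_right_comm]
      _ ≤ ‖μproc k a - μstar‖ + ‖ε k • g (k + 1) a‖ := norm_add_le _ _
      _ = ‖μproc k a - μstar‖ + ε k * ‖g (k + 1) a‖ := by
          rw [norm_smul, Real.norm_eq_abs, abs_of_nonneg (hε k)]
  have hXL2 : ∀ k, MemLp (fun a => μproc (k + 1) a - μstar) 2 P := by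
    intro k
    induction k with
    | zero =>
      exact (memLp_two_iff_integrable_sq_norm
        ((hμmeas 1).sub aestronglyMeasurable_const)).2 hμ1int
    | succ k ih =>
      have hF : MemLp (fun a => ‖μproc (k + 1) a - μstar‖ + ε (k + 1) * ‖g (k + 2) a‖) 2 P :=
        ih.norm.add ((hgL2 (k + 1)).norm.const_mul (ε (k + 1)))
      refine hF.of_le ((hμmeas (k + 2)).sub aestronglyMeasurable_const) ?_
      filter_upwards with a
      rw [Real.norm_eq_abs]
      exact (hbd (k + 1) a).trans (le_abs_self _)
  have hA : ∀ k, Integrable (fun a => ‖μproc (k + 1) a - μstar‖ ^ 2) P := fun k =>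
    (memLp_two_iff_integrable_sq_norm
      ((hμmeas (k + 1)).sub aestronglyMeasurable_const)).1 (hXL2 k)
  set A : ℕ → ℝ := fun k => ∫ a, ‖μproc k a - μstar‖ ^ 2 ∂P with hAdef
  set D : ℕ → ℝ := fun k => h μstar - ∫ a, h (μproc k a) ∂P with hDdef
  have hD0 : ∀ k, 0 ≤ D k := by
    intro k
    have h1 : ∫ a, h (μproc k a) ∂P ≤ ∫ _, h μstar ∂P :=
      integral_mono (hhint k) (integrable_const _) fun a => hmax _
    have h2 : ∫ _ : Ω, h μstar ∂P = h μstar := by simp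
    simp only [hDdef, sub_nonneg]
    rw [← h2]; exact h1
  have hApos : ∀ k, 0 ≤ A k := fun k => integral_nonneg fun a => by positivity
  have hJ : ∀ k, ∫ a, h (μproc k a) ∂P ≤ h (∫ a, μproc k a ∂P) := fun k =>
    hconc.le_map_integral hcont.continuousOn isClosed_univ
      (Eventually.of_forall fun a => Set.mem_univ _) (hμint k) (hhint k)
  have hkey : ∀ k, A (k + 2) ≤ A (k + 1) + ε (k + 1) ^ 2 * G ^ 2 - 2 * ε (k + 1) * D (k + 1) := by
    intro k
    have Iinner : Integrable (fun a => ⟪g (k + 2) a, μproc (k + 1) a - μstar⟫) P :=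
      integrable_inner_of_memL2 (hgL2 (k + 1)) (hXL2 k)
    have hpt : ∀ a, ‖μproc (k + 2) a - μstar‖ ^ 2 ≤
        ‖μproc (k + 1) a - μstar‖ ^ 2
          + 2 * ε (k + 1) * ⟪g (k + 2) a, μproc (k + 1) a - μstar⟫
          + ε (k + 1) ^ 2 * ‖g (k + 2) a‖ ^ 2 := by
      intro a
      have h1 : ‖μproc (k + 2) a - μstar‖ ≤
          ‖(μproc (k + 1) a - μstar) + ε (k + 1) • g (k + 2) a‖ := by
        rw [hupdate (k + 1) a]
        have := projPos_nonexpansive (μproc (k + 1) a + ε (k + 1) • g (k + 2) a) μstar hμstar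
        rwa [add_sub_right_comm] at this
      have h2 : ‖μproc (k + 2) a - μstar‖ ^ 2 ≤
          ‖(μproc (k + 1) a - μstar) + ε (k + 1) • g (k + 2) a‖ ^ 2 :=
        pow_le_pow_left₀ (norm_nonneg _) h1 2
      have h3 : ‖(μproc (k + 1) a - μstar) + ε (k + 1) • g (k + 2) a‖ ^ 2 =
          ‖μproc (k + 1) a - μstar‖ ^ 2
            + 2 * ε (k + 1) * ⟪g (k + 2) a, μproc (k + 1) a - μstar⟫
            + ε (k + 1) ^ 2 * ‖g (k + 2) a‖ ^ 2 := by
        rw [norm_add_sq_real, real_inner_smul_right, norm_smul, mul_pow, Real.norm_eq_abs,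
          sq_abs, real_inner_comm (μproc (k + 1) a - μstar) (g (k + 2) a)]
        ring
      linarith
    have hsum_int : Integrable (fun a => ‖μproc (k + 1) a - μstar‖ ^ 2
        + 2 * ε (k + 1) * ⟪g (k + 2) a, μproc (k + 1) a - μstar⟫
        + ε (k + 1) ^ 2 * ‖g (k + 2) a‖ ^ 2) P :=
      ((hA k).add (Iinner.const_mul _)).add ((hgsqint (k + 1)).const_mul _)
    have hstep : A (k + 2) ≤ A (k + 1)
        + 2 * ε (k + 1) * (∫ a, ⟪g (k + 2) a, μproc (k + 1) a - μstar⟫ ∂P)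
        + ε (k + 1) ^ 2 * (∫ a, ‖g (k + 2) a‖ ^ 2 ∂P) := by
      have h5 := integral_mono (hA (k + 1)) hsum_int hpt
      rw [integral_add, integral_add, integral_const_mul, integral_const_mul] at h5
      · exact h5
      · exact hA k
      · exact Iinner.const_mul _
      · exact (hA k).add (Iinner.const_mul _)
      · exact (hgsqint (k + 1)).const_mul _
    have hgG : ∫ a, ‖g (k + 2) a‖ ^ 2 ∂P ≤ G ^ 2 := by
      have h1 : ∫ a, (P[fun a' => ‖g (k + 2) a'‖ ^ 2|ℱ (k + 1)]) a ∂P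
          = ∫ a, ‖g (k + 2) a‖ ^ 2 ∂P := integral_condExp (ℱ.le (k + 1))
      have h2 : ∫ a, (P[fun a' => ‖g (k + 2) a'‖ ^ 2|ℱ (k + 1)]) a ∂P ≤ ∫ _ : Ω, G ^ 2 ∂P :=
        integral_mono_ae integrable_condExp (integrable_const _) (hbound (k + 1))
      have h3 : ∫ _ : Ω, G ^ 2 ∂P = G ^ 2 := by simp
      rw [h1, h3] at h2
      exact h2
    -- coordinatewise manipulation of the inner product integral
    have hGj_int : ∀ j : Fin n, Integrable (fun a => g (k + 2) a j) P := fun j =>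
      (EuclideanSpace.proj (𝕜 := ℝ) j).integrable_comp (hgint (k + 1))
    have hXjm : ∀ j : Fin n,
        StronglyMeasurable[ℱ (k + 1)] (fun a => (μproc (k + 1) a - μstar) j) := fun j =>
      (EuclideanSpace.proj (𝕜 := ℝ) j).continuous.comp_stronglyMeasurable
        ((hadapted (k + 1)).stronglyMeasurable.sub stronglyMeasurable_const)
    have hprod_int : ∀ j : Fin n,
        Integrable (fun a => (μproc (k + 1) a - μstar) j * g (k + 2) a j) P := by
      intro j
      have hnn : Integrable (fun a => ‖μproc (k + 1) a - μstar‖ * ‖g (k + 2) a‖) P := by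
        have := integrable_inner_of_memL2 (E := ℝ) ((hXL2 k).norm) ((hgL2 (k + 1)).norm)
        simpa [RCLike.inner_apply, conj_trivial, mul_comm] using this
      refine hnn.mono' ?_ ?_
      · exact ((EuclideanSpace.proj (𝕜 := ℝ) j).continuous.comp_aestronglyMeasurable
          ((hμmeas (k + 1)).sub aestronglyMeasurable_const)).mul
          ((EuclideanSpace.proj (𝕜 := ℝ) j).continuous.comp_aestronglyMeasurable (hgms (k + 1)))
      · filter_upwards with a
        rw [Real.norm_eq_abs, abs_mul]
        exact mul_le_mul (coord_abs_le_norm _ j) (coord_abs_le_norm _ j)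
          (abs_nonneg _) (norm_nonneg _)
    have hpull : ∀ j : Fin n,
        (P[fun a => (μproc (k + 1) a - μstar) j * g (k + 2) a j|ℱ (k + 1)]) =ᵐ[P]
          fun a => (μproc (k + 1) a - μstar) j
            * (P[fun a => g (k + 2) a j|ℱ (k + 1)]) a := fun j =>
      condExp_mul_of_stronglyMeasurable_left (hXjm j) (hprod_int j) (hGj_int j)
    have hcoord : ∀ j : Fin n,
        (fun a => (P[g (k + 2)|ℱ (k + 1)]) a j) =ᵐ[P] P[fun a => g (k + 2) a j|ℱ (k + 1)] :=
      fun j => condexp_clm_comm (ℱ.le (k + 1)) P (EuclideanSpace.proj (𝕜 := ℝ) j) (hgint (k + 1))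
    have hterm : ∀ j : Fin n, Integrable (fun a =>
        (μproc (k + 1) a - μstar) j * (P[g (k + 2)|ℱ (k + 1)]) a j) P := by
      intro j
      refine (integrable_condExp.congr (hpull j)).congr ?_
      filter_upwards [hcoord j] with a ha
      simp only [← ha]
    have hqX_int : Integrable (fun a =>
        ⟪(P[g (k + 2)|ℱ (k + 1)]) a, μproc (k + 1) a - μstar⟫) P := by
      have := integrable_finset_sum Finset.univ (fun j (_ : j ∈ Finset.univ) => hterm j)
      refine this.congr ?_
      filter_upwards with a
      simp [PiLp.inner_apply, RCLike.inner_apply, conj_trivial, mul_comm]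
    have hswap : ∫ a, ⟪g (k + 2) a, μproc (k + 1) a - μstar⟫ ∂P
        = ∫ a, ⟪(P[g (k + 2)|ℱ (k + 1)]) a, μproc (k + 1) a - μstar⟫ ∂P := by
      have hL : ∫ a, ⟪g (k + 2) a, μproc (k + 1) a - μstar⟫ ∂P
          = ∑ j : Fin n, ∫ a, (μproc (k + 1) a - μstar) j * g (k + 2) a j ∂P := by
        rw [← integral_finset_sum _ (fun j _ => hprod_int j)]
        apply integral_congr_ae
        filter_upwards with a
        simp [PiLp.inner_apply, RCLike.inner_apply, conj_trivial, mul_comm]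
      have hR : ∫ a, ⟪(P[g (k + 2)|ℱ (k + 1)]) a, μproc (k + 1) a - μstar⟫ ∂P
          = ∑ j : Fin n, ∫ a, (μproc (k + 1) a - μstar) j
              * (P[g (k + 2)|ℱ (k + 1)]) a j ∂P := by
        rw [← integral_finset_sum _ (fun j _ => hterm j)]
        apply integral_congr_ae
        filter_upwards with a
        simp [PiLp.inner_apply, RCLike.inner_apply, conj_trivial, mul_comm]
      rw [hL, hR]
      refine Finset.sum_congr rfl fun j _ => ?_
      calc ∫ a, (μproc (k + 1) a - μstar) j * g (k + 2) a j ∂P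
          = ∫ a, (P[fun a => (μproc (k + 1) a - μstar) j * g (k + 2) a j|ℱ (k + 1)]) a ∂P :=
            (integral_condExp (ℱ.le (k + 1))).symm
        _ = ∫ a, (μproc (k + 1) a - μstar) j
              * (P[fun a => g (k + 2) a j|ℱ (k + 1)]) a ∂P := integral_congr_ae (hpull j)
        _ = ∫ a, (μproc (k + 1) a - μstar) j * (P[g (k + 2)|ℱ (k + 1)]) a j ∂P := by
            apply integral_congr_ae
            filter_upwards [hcoord j] with a ha
            rw [← ha]
    have hqb : ∀ᵐ a ∂P, ⟪(P[g (k + 2)|ℱ (k + 1)]) a, μproc (k + 1) a - μstar⟫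
        ≤ h (μproc (k + 1) a) - h μstar := by
      filter_upwards [hsupergrad (k + 1)] with a ha
      have h1 := ha μstar
      rw [← neg_sub (μproc (k + 1) a) μstar, inner_neg_right] at h1
      linarith
    have hinner_le : ∫ a, ⟪g (k + 2) a, μproc (k + 1) a - μstar⟫ ∂P ≤ -D (k + 1) := by
      rw [hswap]
      have hInt2 : Integrable (fun a => h (μproc (k + 1) a) - h μstar) P :=
        (hhint (k + 1)).sub (integrable_const _)
      have h4 := integral_mono_ae hqX_int hInt2 hqb
      rw [integral_sub (hhint (k + 1)) (integrable_const _)] at h4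
      simp only [integral_const, measure_univ, ENNReal.toReal_one, probReal_univ, one_smul,
        smul_eq_mul, one_mul] at h4
      simp only [hDdef]
      linarith
    have h2e : 2 * ε (k + 1) * (∫ a, ⟪g (k + 2) a, μproc (k + 1) a - μstar⟫ ∂P)
        ≤ 2 * ε (k + 1) * (-D (k + 1)) :=
      mul_le_mul_of_nonneg_left hinner_le (by have := hε (k + 1); linarith)
    have h3e : ε (k + 1) ^ 2 * (∫ a, ‖g (k + 2) a‖ ^ 2 ∂P) ≤ ε (k + 1) ^ 2 * G ^ 2 :=
      mul_le_mul_of_nonneg_left hgG (by positivity)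
    linarith [hstep]
  -- telescoping sum
  have hsum : ∀ K : ℕ, A (K + 1) + 2 * ∑ k ∈ Finset.range K, ε (k + 1) * D (k + 1)
      ≤ A 1 + G ^ 2 * ∑ k ∈ Finset.range K, ε (k + 1) ^ 2 := by
    intro K
    induction K with
    | zero => simp
    | succ K ih =>
      rw [Finset.sum_range_succ, Finset.sum_range_succ]
      have h1 := hkey K
      have h2 : ε (K + 1) ^ 2 * G ^ 2 = G ^ 2 * ε (K + 1) ^ 2 := mul_comm _ _
      linarith
  have hεsq1 : Summable (fun k => ε (k + 1) ^ 2) :=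
    (summable_nat_add_iff 1).2 hεsq
  have hCbound : ∀ K : ℕ, ∑ k ∈ Finset.range K, ε (k + 1) * D (k + 1)
      ≤ (A 1 + G ^ 2 * ∑' k, ε (k + 1) ^ 2) / 2 := by
    intro K
    have h1 := hsum K
    have h2 : ∑ k ∈ Finset.range K, ε (k + 1) ^ 2 ≤ ∑' k, ε (k + 1) ^ 2 :=
      Summable.sum_le_tsum _ (fun i _ => by positivity) hεsq1
    have h3 := hApos (K + 1)
    have h4 : G ^ 2 * ∑ k ∈ Finset.range K, ε (k + 1) ^ 2
        ≤ G ^ 2 * ∑' k, ε (k + 1) ^ 2 := mul_le_mul_of_nonneg_left h2 (by positivity)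
    linarith
  have hsummable : Summable (fun k => ε (k + 1) * D (k + 1)) :=
    summable_of_sum_range_le (fun k => mul_nonneg (hε _) (hD0 _)) hCbound
  -- infinitely often small
  have hinf : ∀ δ : ℝ, 0 < δ → ∀ N : ℕ, ∃ k ≥ N, D (k + 1) < δ := by
    intro δ hδ N
    by_contra hcon
    push_neg at hcon
    have h1 : Summable (fun k => ε (k + N + 1) * D (k + N + 1)) :=
      (summable_nat_add_iff N).2 hsummable
    have h2 : Summable (fun k => δ * ε (k + N + 1)) := by
      refine Summable.of_nonneg_of_le (fun k => mul_nonneg hδ.le (hε _)) (fun k => ?_) h1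
      calc δ * ε (k + N + 1) = ε (k + N + 1) * δ := mul_comm _ _
        _ ≤ ε (k + N + 1) * D (k + N + 1) :=
            mul_le_mul_of_nonneg_left (hcon (k + N) (Nat.le_add_left N k)) (hε _)
    have h3 : Summable (fun k => ε (k + N + 1)) :=
      ((summable_mul_left_iff hδ.ne').1 h2)
    have h4 : Summable ε := by
      refine (summable_nat_add_iff (N + 1)).1 ?_
      simpa [add_assoc] using h3
    exact (not_tendsto_atTop_of_tendsto_nhds h4.hasSum.tendsto_sum_nat) hεdiv
  -- conclusion
  refine le_antisymm (hmax μtilde) ?_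
  by_contra hlt
  push_neg at hlt
  have hδ : 0 < (h μstar - h μtilde) / 2 := by linarith
  have htend : Tendsto (fun k => h (∫ a, μproc k a ∂P)) atTop (nhds (h μtilde)) :=
    (hcont.tendsto μtilde).comp hmean
  have hev : ∀ᶠ k in atTop, h (∫ a, μproc k a ∂P)
      < h μtilde + (h μstar - h μtilde) / 2 :=
    htend.eventually_lt_const (by linarith)
  obtain ⟨N, hN⟩ := eventually_atTop.1 hev
  obtain ⟨k, hk, hDk⟩ := hinf _ hδ N
  have h1 := hN (k + 1) (le_trans hk (Nat.le_succ k))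
  have h2 := hJ (k + 1)
  simp only [hDdef] at hDk
  linarith
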